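/- Let G = (V,E) be an undirected graph on {1,...,n} with maximum degree at most d. If the identity labeling of G is ε-far from a valid DFS numbering when only edge modifications are allowed (every G' = (V,E') of max degree ≤ d for which the identity labeling is a valid DFS numbering has |E △ E'| > εn), then for every graph G' = (V,E') of maximum degree at most d and every bijection ν' : V → {1,...,n} that is a valid DFS numbering of G', we have |E △ E'| + |{v ∈ V : ν'(v) ≠ v}| > (ε/(2d))·n. Conversely, ε-farness under edge-and-label modifications implies ε-farness under edge modifications alone. -/

import Mathlib

open Classical

/-- `adj` is (the adjacency relation of) a simple undirected graph on vertex set `{1,…,n}`. -/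
def IsGraphOn (n : ℕ) (adj : ℕ → ℕ → Prop) : Prop :=
  Symmetric adj ∧ ∀ u v, adj u v → 1 ≤ u ∧ u ≤ n ∧ 1 ≤ v ∧ v ≤ n ∧ u ≠ v

/-- `p(v)`: the largest neighbour of `v` that is smaller than `v`, and `0` if none exists
(`sSup ∅ = 0` in `ℕ`). -/
noncomputable def par (adj : ℕ → ℕ → Prop) (v : ℕ) : ℕ :=
  sSup {u | adj u v ∧ u < v}

/-- `(v, {u,w})` is a conflicting pair: `{u,w}` is an edge and `p(v) < u < v < w`. -/
def Conflict (adj : ℕ → ℕ → Prop) (v u w : ℕ) : Prop :=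
  adj u w ∧ par adj v < u ∧ u < v ∧ v < w

/-- One step of a (nondeterministic) depth-first search.  The state consists of the list of
already discovered vertices, in order of discovery and together with the recorded (possibly
virtual) parent from which each was discovered, and of the stack of active vertices
(the white path, top first). -/
inductive DFSStep (n : ℕ) (adj : ℕ → ℕ → Prop) :
    List (ℕ × ℕ) × List ℕ → List (ℕ × ℕ) × List ℕ → Prop
  | root (v : ℕ) (order : List (ℕ × ℕ)) (hv1 : 1 ≤ v) (hv2 : v ≤ n)
      (hnd : v ∉ order.map Prod.fst) :
      DFSStep n adj (order, []) (order ++ [(v, 0)], [v])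
  | descend (v t : ℕ) (order : List (ℕ × ℕ)) (stack : List ℕ)
      (hadj : adj t v) (hnd : v ∉ order.map Prod.fst) :
      DFSStep n adj (order, t :: stack) (order ++ [(v, t)], v :: t :: stack)
  | backtrack (t : ℕ) (order : List (ℕ × ℕ)) (stack : List ℕ)
      (hall : ∀ u, adj t u → u ∈ order.map Prod.fst) :
      DFSStep n adj (order, t :: stack) (order, stack)

/-- A complete DFS run discovering the vertices in the order given by the list `order`. -/
def DFSRun (n : ℕ) (adj : ℕ → ℕ → Prop) (order : List (ℕ × ℕ)) : Prop :=
  Relation.ReflTransGen (DFSStep n adj) ([], []) (order, [])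

/-- The labelling `f` is a valid DFS numbering of the graph: some DFS run discovers the
vertices in the order of increasing labels `1, 2, …, n`. -/
def ValidDFSLabel (n : ℕ) (adj : ℕ → ℕ → Prop) (f : ℕ → ℕ) : Prop :=
  ∃ order, DFSRun n adj order ∧ (order.map Prod.fst).map f = List.range' 1 n

/-- The identity labelling on `{1,…,n}` is a valid DFS numbering of the graph. -/
def ValidDFS (n : ℕ) (adj : ℕ → ℕ → Prop) : Prop :=
  ValidDFSLabel n adj id

/-- The graph is connected (on its vertex set `{1,…,n}`). -/
def ConnOn (n : ℕ) (adj : ℕ → ℕ → Prop) : Prop :=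
  ∀ u v, 1 ≤ u → u ≤ n → 1 ≤ v → v ≤ n → Relation.ReflTransGen adj u v

/-- The degree of a vertex. -/
noncomputable def degree (adj : ℕ → ℕ → Prop) (v : ℕ) : ℕ :=
  Set.ncard {u | adj u v}

/-- The size `|E △ E'|` of the symmetric difference of the edge sets of two graphs
(given by symmetric adjacency relations). -/
noncomputable def edgeDiff (a b : ℕ → ℕ → Prop) : ℕ :=
  Set.ncard {p : ℕ × ℕ | p.1 < p.2 ∧ ¬(a p.1 p.2 ↔ b p.1 p.2)}

/-! ### Auxiliary development -/

/-- Pushforward of a graph along a labelling. -/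
def relabel (adj' : ℕ → ℕ → Prop) (ν : ℕ → ℕ) : ℕ → ℕ → Prop :=
  fun x y => ∃ u w, adj' u w ∧ ν u = x ∧ ν w = y

section Relabel

variable {n : ℕ} {adj' : ℕ → ℕ → Prop} {ν : ℕ → ℕ}

theorem relabel_graphOn (hG' : IsGraphOn n adj')
    (hb : Set.BijOn ν (Set.Icc 1 n) (Set.Icc 1 n)) : IsGraphOn n (relabel adj' ν) := by
  constructor
  · rintro x y ⟨u, w, h, hu, hw⟩; exact ⟨w, u, hG'.1 h, hw, hu⟩
  · rintro x y ⟨u, w, h, rfl, rfl⟩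
    obtain ⟨h1, h2, h3, h4, h5⟩ := hG'.2 u w h
    have hu : u ∈ Set.Icc 1 n := ⟨h1, h2⟩
    have hw : w ∈ Set.Icc 1 n := ⟨h3, h4⟩
    have hνu := hb.1 hu
    have hνw := hb.1 hw
    exact ⟨hνu.1, hνu.2, hνw.1, hνw.2, fun he => h5 (hb.2.1 hu hw he)⟩

theorem relabel_degree (hG' : IsGraphOn n adj') (hb : Set.BijOn ν (Set.Icc 1 n) (Set.Icc 1 n)) (d : ℕ) (hdeg' : ∀ v, degree adj' v ≤ d) (y : ℕ) :
    degree (relabel adj' ν) y ≤ d := by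
  by_cases h : ∃ w, w ∈ Set.Icc 1 n ∧ ν w = y
  · obtain ⟨w, hw, rfl⟩ := h
    have hsub : {x | relabel adj' ν x (ν w)} = ν '' {u | adj' u w} := by
      ext x
      constructor
      · rintro ⟨u, b, hab, rfl, hbw⟩
        obtain ⟨_, _, h3, h4, _⟩ := hG'.2 u b hab
        have : b = w := hb.2.1 ⟨h3, h4⟩ hw hbw
        exact ⟨u, this ▸ hab, rfl⟩
      · rintro ⟨u, hu, rfl⟩
        exact ⟨u, w, hu, rfl, rfl⟩
    have hfin : {u | adj' u w}.Finite := by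
      apply Set.Finite.subset (Set.finite_Icc 1 n)
      intro u hu
      obtain ⟨h1, h2, _⟩ := hG'.2 u w hu
      exact ⟨h1, h2⟩
    calc degree (relabel adj' ν) (ν w) = (ν '' {u | adj' u w}).ncard := by
          rw [degree, hsub]
      _ ≤ ({u | adj' u w}).ncard := Set.ncard_image_le hfin
      _ ≤ d := hdeg' w
  · have : {x | relabel adj' ν x y} = ∅ := by
      ext x
      simp only [Set.mem_empty_iff_false, iff_false, Set.mem_setOf_eq]
      rintro ⟨u, b, hab, _, hbw⟩
      obtain ⟨_, _, h3, h4, _⟩ := hG'.2 u b hab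
      exact h ⟨b, ⟨h3, h4⟩, hbw⟩
    rw [degree, this]
    simp

/-- relabelled pair -/
def rl (ν : ℕ → ℕ) : ℕ × ℕ → ℕ × ℕ := fun p => (ν p.1, if p.2 = 0 then 0 else ν p.2)

def DFSInv (n : ℕ) (s : List (ℕ × ℕ) × List ℕ) : Prop :=
  (∀ v ∈ s.1.map Prod.fst, v ∈ Set.Icc 1 n) ∧ (∀ v ∈ s.2, v ∈ Set.Icc 1 n)

theorem relabel_run (hG' : IsGraphOn n adj') (hb : Set.BijOn ν (Set.Icc 1 n) (Set.Icc 1 n)) {s : List (ℕ × ℕ) × List ℕ}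
    (h : Relation.ReflTransGen (DFSStep n adj') ([], []) s) :
    DFSInv n s ∧ Relation.ReflTransGen (DFSStep n (relabel adj' ν))
      ([], []) (s.1.map (rl ν), s.2.map ν) := by
  induction h with
  | refl => exact ⟨⟨by simp, by simp⟩, Relation.ReflTransGen.refl⟩
  | tail _ hstep ih =>
    obtain ⟨⟨hordInv, hstInv⟩, hrun⟩ := ih
    cases hstep with
    | root v order hv1 hv2 hnd =>
      refine ⟨⟨?_, ?_⟩, hrun.tail ?_⟩
      · intro u hu
        simp only [List.map_append, List.mem_append, List.map_cons] at hu
        rcases hu with hu | hu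
        · exact hordInv u hu
        · simp at hu; exact hu ▸ ⟨hv1, hv2⟩
      · intro u hu; simp at hu; exact hu ▸ ⟨hv1, hv2⟩
      · have hνv := hb.1 ⟨hv1, hv2⟩
        have : (order ++ [(v, 0)]).map (rl ν) = order.map (rl ν) ++ [(ν v, 0)] := by
          simp [rl]
        rw [this]
        have hnd' : ν v ∉ (order.map (rl ν)).map Prod.fst := by
          simp only [List.map_map, List.mem_map, Function.comp] at *
          rintro ⟨p, hp, hpv⟩
          have hp1 : p.1 ∈ Set.Icc 1 n := hordInv p.1 ⟨p, hp, rfl⟩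
          have : p.1 = v := hb.2.1 hp1 ⟨hv1, hv2⟩ hpv
          exact hnd ⟨p, hp, this⟩
        exact DFSStep.root (ν v) _ hνv.1 hνv.2 hnd'
    | descend v t order stack hadj hnd =>
      obtain ⟨ht1, ht2, hv1, hv2, _⟩ := hG'.2 t v hadj
      refine ⟨⟨?_, ?_⟩, hrun.tail ?_⟩
      · intro u hu
        simp only [List.map_append, List.mem_append] at hu
        rcases hu with hu | hu
        · exact hordInv u hu
        · simp at hu; exact hu ▸ ⟨hv1, hv2⟩
      · intro u hu
        simp only [List.mem_cons] at hu
        rcases hu with rfl | hu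
        · exact ⟨hv1, hv2⟩
        · exact hstInv u (List.mem_cons.mpr hu)
      · have ht0 : t ≠ 0 := by omega
        have : (order ++ [(v, t)]).map (rl ν) = order.map (rl ν) ++ [(ν v, ν t)] := by
          simp [rl, ht0]
        rw [this]
        have hnd' : ν v ∉ (order.map (rl ν)).map Prod.fst := by
          simp only [List.map_map, List.mem_map, Function.comp] at *
          rintro ⟨p, hp, hpv⟩
          have hp1 : p.1 ∈ Set.Icc 1 n := hordInv p.1 ⟨p, hp, rfl⟩
          have : p.1 = v := hb.2.1 hp1 ⟨hv1, hv2⟩ hpv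
          exact hnd ⟨p, hp, this⟩
        exact DFSStep.descend (ν v) (ν t) _ _ ⟨t, v, hadj, rfl, rfl⟩ hnd'
    | backtrack t order stack hall =>
      refine ⟨⟨hordInv, ?_⟩, hrun.tail ?_⟩
      · intro u hu
        exact hstInv u (List.mem_cons_of_mem t hu)
      have ht : t ∈ Set.Icc 1 n := hstInv t (List.mem_cons_self)
      refine DFSStep.backtrack (ν t) _ _ ?_
      rintro u ⟨a, b, hab, hat, rfl⟩
      obtain ⟨ha1, ha2, hb1, hb2, _⟩ := hG'.2 a b hab
      have : a = t := hb.2.1 ⟨ha1, ha2⟩ ht hat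
      subst this
      have hbmem := hall b hab
      simp only [List.map_map, List.mem_map, Function.comp] at *
      obtain ⟨p, hp, hpb⟩ := hbmem
      exact ⟨p, hp, by simp [rl, hpb]⟩

theorem relabel_valid (hG' : IsGraphOn n adj') (hb : Set.BijOn ν (Set.Icc 1 n) (Set.Icc 1 n)) (hval : ValidDFSLabel n adj' ν) : ValidDFS n (relabel adj' ν) := by
  obtain ⟨order, hrun, hord⟩ := hval
  refine ⟨order.map (rl ν), (relabel_run hG' hb hrun).2, ?_⟩
  simp only [List.map_map, List.map_id]
  rw [← hord]
  simp [rl, Function.comp]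

end Relabel

theorem diffSet_finite {n : ℕ} {a b : ℕ → ℕ → Prop} (hGa : IsGraphOn n a)
    (hGb : IsGraphOn n b) :
    {p : ℕ × ℕ | p.1 < p.2 ∧ ¬(a p.1 p.2 ↔ b p.1 p.2)}.Finite := by
  apply Set.Finite.subset ((Set.finite_Icc 1 n).prod (Set.finite_Icc 1 n))
  rintro ⟨x, y⟩ ⟨-, hab⟩
  have : a x y ∨ b x y := by tauto
  rcases this with h | h
  · obtain ⟨h1, h2, h3, h4, -⟩ := hGa.2 x y h; exact ⟨⟨h1, h2⟩, ⟨h3, h4⟩⟩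
  · obtain ⟨h1, h2, h3, h4, -⟩ := hGb.2 x y h; exact ⟨⟨h1, h2⟩, ⟨h3, h4⟩⟩

theorem edgeDiff_triangle {n : ℕ} {a b c : ℕ → ℕ → Prop} (hGa : IsGraphOn n a)
    (hGb : IsGraphOn n b) (hGc : IsGraphOn n c) :
    edgeDiff a c ≤ edgeDiff a b + edgeDiff b c := by
  have hsub : {p : ℕ × ℕ | p.1 < p.2 ∧ ¬(a p.1 p.2 ↔ c p.1 p.2)} ⊆
      {p : ℕ × ℕ | p.1 < p.2 ∧ ¬(a p.1 p.2 ↔ b p.1 p.2)} ∪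
      {p : ℕ × ℕ | p.1 < p.2 ∧ ¬(b p.1 p.2 ↔ c p.1 p.2)} := by
    rintro p ⟨h1, h2⟩
    by_cases h : a p.1 p.2 ↔ b p.1 p.2
    · exact Or.inr ⟨h1, by tauto⟩
    · exact Or.inl ⟨h1, h⟩
  calc edgeDiff a c ≤ _ := Set.ncard_le_ncard hsub
        ((diffSet_finite hGa hGb).union (diffSet_finite hGb hGc))
    _ ≤ edgeDiff a b + edgeDiff b c := Set.ncard_union_le _ _

theorem count_bound {n d : ℕ} {a b : ℕ → ℕ → Prop} {ν : ℕ → ℕ}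
    (hGa : IsGraphOn n a) (hGb : IsGraphOn n b)
    (hda : ∀ v, degree a v ≤ d) (hdb : ∀ v, degree b v ≤ d)
    (hkey : ∀ x y, x ∈ Set.Icc 1 n → y ∈ Set.Icc 1 n → ν x = x → ν y = y →
      (a x y ↔ b x y)) :
    edgeDiff a b ≤ 2 * d * Set.ncard {v | 1 ≤ v ∧ v ≤ n ∧ ν v ≠ v} := by
  classical
  set I : Finset ℕ := Finset.Icc 1 n with hI
  set DF : Finset (ℕ × ℕ) :=
    (I ×ˢ I).filter (fun p => p.1 < p.2 ∧ ¬(a p.1 p.2 ↔ b p.1 p.2)) with hDF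
  set SF : Finset ℕ := I.filter (fun v => ν v ≠ v) with hSF
  have hDcoe : {p : ℕ × ℕ | p.1 < p.2 ∧ ¬(a p.1 p.2 ↔ b p.1 p.2)} = ↑DF := by
    ext ⟨x, y⟩
    simp only [hDF, Finset.coe_filter, Set.mem_setOf_eq, Finset.mem_product, hI,
      Finset.mem_Icc]
    constructor
    · rintro ⟨h1, h2⟩
      refine ⟨?_, h1, h2⟩
      have : a x y ∨ b x y := by tauto
      rcases this with h | h
      · obtain ⟨u1, u2, u3, u4, -⟩ := hGa.2 x y h; exact ⟨⟨u1, u2⟩, ⟨u3, u4⟩⟩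
      · obtain ⟨u1, u2, u3, u4, -⟩ := hGb.2 x y h; exact ⟨⟨u1, u2⟩, ⟨u3, u4⟩⟩
    · rintro ⟨-, h1, h2⟩; exact ⟨h1, h2⟩
  have hScoe : {v | 1 ≤ v ∧ v ≤ n ∧ ν v ≠ v} = ↑SF := by
    ext v
    simp only [hSF, Finset.coe_filter, Set.mem_setOf_eq, hI, Finset.mem_Icc]
    tauto
  rw [edgeDiff, hDcoe, hScoe, Set.ncard_coe_finset, Set.ncard_coe_finset]
  have hsub : DF ⊆ SF.biUnion (fun v => DF.filter (fun p => p.1 = v ∨ p.2 = v)) := by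
    intro p hp
    have hp' := hp
    simp only [hDF, Finset.mem_filter, Finset.mem_product, hI, Finset.mem_Icc] at hp'
    obtain ⟨⟨hx, hy⟩, hlt, hne⟩ := hp'
    have : ν p.1 ≠ p.1 ∨ ν p.2 ≠ p.2 := by
      by_contra h
      push_neg at h
      exact hne (hkey p.1 p.2 (by simpa using hx) (by simpa using hy) h.1 h.2)
    rcases this with h | h
    · exact Finset.mem_biUnion.mpr ⟨p.1, by simp [hSF, hI, Finset.mem_Icc, hx, h],
        Finset.mem_filter.mpr ⟨hp, Or.inl rfl⟩⟩
    · exact Finset.mem_biUnion.mpr ⟨p.2, by simp [hSF, hI, Finset.mem_Icc, hy, h],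
        Finset.mem_filter.mpr ⟨hp, Or.inr rfl⟩⟩
  have hver : ∀ v, (DF.filter (fun p => p.1 = v ∨ p.2 = v)).card ≤ 2 * d := by
    intro v
    have hinj : (DF.filter (fun p => p.1 = v ∨ p.2 = v)).card ≤
        (I.filter (fun u => a u v ∨ b u v)).card := by
      apply Finset.card_le_card_of_injOn (fun p => p.1 + p.2 - v)
      · intro p hp
        simp only [Finset.mem_coe, Finset.mem_filter] at hp
        obtain ⟨hpD, hpv⟩ := hp
        simp only [hDF, Finset.mem_filter, Finset.mem_product] at hpD
        obtain ⟨⟨hx, hy⟩, hlt, hne⟩ := hpD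
        have hab : a p.1 p.2 ∨ b p.1 p.2 := by tauto
        rcases hpv with h | h
        · have hval : p.1 + p.2 - v = p.2 := by omega
          beta_reduce
          rw [hval]
          simp only [Finset.mem_coe, Finset.mem_filter]
          refine ⟨hy, ?_⟩
          rcases hab with h' | h'
          · exact Or.inl (h ▸ hGa.1 h')
          · exact Or.inr (h ▸ hGb.1 h')
        · have hval : p.1 + p.2 - v = p.1 := by omega
          beta_reduce
          rw [hval]
          simp only [Finset.mem_coe, Finset.mem_filter]
          exact ⟨hx, by rwa [← h]⟩
      · intro p hp q hq hpq
        simp only [Finset.coe_filter, Set.mem_setOf_eq] at hp hq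
        obtain ⟨hpD, hpv⟩ := hp
        obtain ⟨hqD, hqv⟩ := hq
        simp only [hDF, Finset.mem_filter, Finset.mem_product, hI, Finset.mem_Icc] at hpD hqD
        obtain ⟨⟨hpx, hpy⟩, hplt, -⟩ := hpD
        obtain ⟨⟨hqx, hqy⟩, hqlt, -⟩ := hqD
        have := hpx.1; have := hpy.1; have := hqx.1; have := hqy.1
        have hpq' : p.1 + p.2 - v = q.1 + q.2 - v := hpq
        rcases hpv with h1 | h1 <;> rcases hqv with h2 | h2 <;>
          (ext <;> omega)
    have hsplit : (I.filter (fun u => a u v ∨ b u v)).card ≤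
        (I.filter (fun u => a u v)).card + (I.filter (fun u => b u v)).card := by
      rw [Finset.filter_or]
      exact Finset.card_union_le _ _
    have hca : (I.filter (fun u => a u v)).card ≤ d := by
      have : ↑(I.filter (fun u => a u v)) ⊆ {u | a u v} := by
        intro u hu; simp only [Finset.coe_filter, Set.mem_setOf_eq] at hu; exact hu.2
      calc (I.filter (fun u => a u v)).card
          = (↑(I.filter (fun u => a u v)) : Set ℕ).ncard := (Set.ncard_coe_finset _).symm
        _ ≤ Set.ncard {u | a u v} := Set.ncard_le_ncard this
            (Set.Finite.subset (Set.finite_Icc 1 n)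
              (fun u hu => by obtain ⟨h1, h2, -⟩ := hGa.2 u v hu; exact ⟨h1, h2⟩))
        _ ≤ d := hda v
    have hcb : (I.filter (fun u => b u v)).card ≤ d := by
      have : ↑(I.filter (fun u => b u v)) ⊆ {u | b u v} := by
        intro u hu; simp only [Finset.coe_filter, Set.mem_setOf_eq] at hu; exact hu.2
      calc (I.filter (fun u => b u v)).card
          = (↑(I.filter (fun u => b u v)) : Set ℕ).ncard := (Set.ncard_coe_finset _).symm
        _ ≤ Set.ncard {u | b u v} := Set.ncard_le_ncard this
            (Set.Finite.subset (Set.finite_Icc 1 n)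
              (fun u hu => by obtain ⟨h1, h2, -⟩ := hGb.2 u v hu; exact ⟨h1, h2⟩))
        _ ≤ d := hdb v
    omega
  calc DF.card ≤ (SF.biUnion (fun v => DF.filter (fun p => p.1 = v ∨ p.2 = v))).card :=
        Finset.card_le_card hsub
    _ ≤ ∑ v ∈ SF, (DF.filter (fun p => p.1 = v ∨ p.2 = v)).card := Finset.card_biUnion_le
    _ ≤ ∑ _v ∈ SF, 2 * d := Finset.sum_le_sum (fun v _ => hver v)
    _ = 2 * d * SF.card := by rw [Finset.sum_const, smul_eq_mul, mul_comm]

/-- For a graph `G` of maximum degree at most `d` on `{1,…,n}`: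
(1) if the identity labelling is `ε`-far from a valid DFS numbering under edge modifications
only, then for every graph `G'` of max degree ≤ `d` and every bijection `ν'` of `{1,…,n}`
that is a valid DFS numbering of `G'` we have
`|E △ E'| + |{v : ν'(v) ≠ v}| > (ε/(2d))·n`; and
(2) conversely, `ε`-farness under edge-and-label modifications implies `ε`-farness under edge
modifications alone. -/
theorem label_edits_vs_edge_edits (n d : ℕ) (adj : ℕ → ℕ → Prop) (ε : ℝ)
    (hG : IsGraphOn n adj) (hd : 0 < d) (hdeg : ∀ v, degree adj v ≤ d) :
    ((∀ adj' : ℕ → ℕ → Prop, IsGraphOn n adj' → (∀ v, degree adj' v ≤ d) →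
        ValidDFS n adj' → ε * n < (edgeDiff adj adj' : ℝ)) →
      ∀ (adj' : ℕ → ℕ → Prop) (ν : ℕ → ℕ), IsGraphOn n adj' →
        (∀ v, degree adj' v ≤ d) → Set.BijOn ν (Set.Icc 1 n) (Set.Icc 1 n) →
        ValidDFSLabel n adj' ν →
        ε / (2 * d) * n <
          (edgeDiff adj adj' : ℝ) +
            (Set.ncard {v | 1 ≤ v ∧ v ≤ n ∧ ν v ≠ v} : ℝ)) ∧
    ((∀ (adj' : ℕ → ℕ → Prop) (ν : ℕ → ℕ), IsGraphOn n adj' →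
        (∀ v, degree adj' v ≤ d) → Set.BijOn ν (Set.Icc 1 n) (Set.Icc 1 n) →
        ValidDFSLabel n adj' ν →
        ε * n <
          (edgeDiff adj adj' : ℝ) +
            (Set.ncard {v | 1 ≤ v ∧ v ≤ n ∧ ν v ≠ v} : ℝ)) →
      ∀ adj' : ℕ → ℕ → Prop, IsGraphOn n adj' → (∀ v, degree adj' v ≤ d) →
        ValidDFS n adj' → ε * n < (edgeDiff adj adj' : ℝ)) := by
  constructor
  · intro hfar adj' ν hG' hdeg' hb hval
    set adj2 := relabel adj' ν with hadj2
    have hG2 : IsGraphOn n adj2 := relabel_graphOn hG' hb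
    have hdeg2 : ∀ v, degree adj2 v ≤ d := relabel_degree hG' hb d hdeg'
    have hval2 : ValidDFS n adj2 := relabel_valid hG' hb hval
    have h1 : ε * n < (edgeDiff adj adj2 : ℝ) := hfar adj2 hG2 hdeg2 hval2
    have hkey : ∀ x y, x ∈ Set.Icc 1 n → y ∈ Set.Icc 1 n → ν x = x → ν y = y →
        (adj' x y ↔ adj2 x y) := by
      intro x y hx hy hνx hνy
      constructor
      · intro h; exact ⟨x, y, h, hνx, hνy⟩
      · rintro ⟨u, w, h, hu, hw⟩
        obtain ⟨u1, u2, w1, w2, -⟩ := hG'.2 u w h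
        have hux : u = x := hb.2.1 ⟨u1, u2⟩ hx (by rw [hu, hνx])
        have hwy : w = y := hb.2.1 ⟨w1, w2⟩ hy (by rw [hw, hνy])
        rw [← hux, ← hwy]; exact h
    have h3 := count_bound hG' hG2 hdeg' hdeg2 hkey
    have h2 := edgeDiff_triangle hG hG' hG2
    set K := Set.ncard {v | 1 ≤ v ∧ v ≤ n ∧ ν v ≠ v} with hK
    have hcomb : edgeDiff adj adj2 ≤ edgeDiff adj adj' + 2 * d * K := h2.trans (by omega)
    have hR : (edgeDiff adj adj2 : ℝ) ≤ (edgeDiff adj adj' : ℝ) + 2 * d * K := by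
      exact_mod_cast hcomb
    have hd2 : (0 : ℝ) < 2 * d := by positivity
    rw [div_mul_eq_mul_div, div_lt_iff₀ hd2]
    have hE0 : (0 : ℝ) ≤ (edgeDiff adj adj' : ℝ) := Nat.cast_nonneg _
    have hK0 : (0 : ℝ) ≤ (K : ℝ) := Nat.cast_nonneg _
    have h2d1 : (1 : ℝ) ≤ 2 * d := by
      have : 1 ≤ 2 * d := by omega
      exact_mod_cast this
    nlinarith [h1, hR, hE0, hK0]
  · intro hyp adj' hG' hdeg' hval
    have h := hyp adj' id hG' hdeg' (Set.bijOn_id _) hval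
    have hempty : {v | 1 ≤ v ∧ v ≤ n ∧ id v ≠ v} = (∅ : Set ℕ) := by ext v; simp
    rw [hempty] at h
    simpa using h
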